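/- For all integers i, j, k with 0 ≤ i < j < k ≤ n and every X ⊆ C_k, the composition of downward erosions collapses: ε⁻_{j,i}(ε⁻_{k,j}(X)) = ε⁻_{k,i}(X). -/

import Mathlib

variable {V : Type*}

/-- `C` is a simplicial complex: every member is a nonempty finite set, and every
nonempty subset of a member of `C` also belongs to `C`. -/
def IsComplex (C : Set (Finset V)) : Prop :=
  (∀ x ∈ C, x.Nonempty) ∧ ∀ x ∈ C, ∀ y : Finset V, y ⊆ x → y.Nonempty → y ∈ C

/-- The set `C_p` of `p`-simplices of `C` (the dimension of a simplex `x` is `x.card - 1`). -/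
def simplices (C : Set (Finset V)) (p : ℕ) : Set (Finset V) :=
  {x | x ∈ C ∧ x.card - 1 = p}

/-- `δ⁺_{i,j}(X)`: the `j`-simplices of `C` that include an `i`-simplex of `X`. -/
def dilPlus (C : Set (Finset V)) (i j : ℕ) (X : Set (Finset V)) : Set (Finset V) :=
  {x | x ∈ simplices C j ∧ ∃ y ∈ X, y ⊆ x}

/-- `ε⁺_{i,j}(X)`: the `j`-simplices of `C` all of whose `i`-dimensional subsets are in `X`. -/
def eroPlus (C : Set (Finset V)) (i j : ℕ) (X : Set (Finset V)) : Set (Finset V) :=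
  {x | x ∈ simplices C j ∧ ∀ y ∈ simplices C i, y ⊆ x → y ∈ X}

/-- `δ⁻_{j,i}(Y)`: the `i`-simplices of `C` included in some `j`-simplex of `Y`. -/
def dilMinus (C : Set (Finset V)) (j i : ℕ) (Y : Set (Finset V)) : Set (Finset V) :=
  {x | x ∈ simplices C i ∧ ∃ y ∈ Y, x ⊆ y}

/-- `ε⁻_{j,i}(Y)`: the `i`-simplices of `C` all of whose `j`-dimensional supersets in `C` are in `Y`. -/
def eroMinus (C : Set (Finset V)) (j i : ℕ) (Y : Set (Finset V)) : Set (Finset V) :=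
  {x | x ∈ simplices C i ∧ ∀ y ∈ simplices C j, x ⊆ y → y ∈ Y}

/-- The star `St(X)` of `X ⊆ C`. -/
def starOp (C : Set (Finset V)) (X : Set (Finset V)) : Set (Finset V) :=
  {y | y ∈ C ∧ ∃ x ∈ X, x ⊆ y}

/-- The closure `Cl(X)`. -/
def closOp (X : Set (Finset V)) : Set (Finset V) :=
  {y : Finset V | y.Nonempty ∧ ∃ x ∈ X, y ⊆ x}

theorem stmt11 (C : Set (Finset V)) (n : ℕ) (hfin : C.Finite) (hne : C.Nonempty)
    (hC : IsComplex C) (hn : 2 ≤ n)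
    (hub : ∀ x ∈ C, x.card - 1 ≤ n) (htop : ∃ x ∈ C, x.card - 1 = n)
    (i j k : ℕ) (hij : i < j) (hjk : j < k) (hkn : k ≤ n)
    (X : Set (Finset V)) (hX : X ⊆ simplices C k) :
    eroMinus C j i (eroMinus C k j X) = eroMinus C k i X := by
  obtain ⟨hCne, hCsub⟩ := hC
  have hcard : ∀ p : ℕ, ∀ x ∈ simplices C p, x.card = p + 1 := by
    intro p x hx
    have h1 : 1 ≤ x.card := Finset.card_pos.mpr (hCne x hx.1)
    have := hx.2
    omega
  ext x
  constructor
  · rintro ⟨hxi, hforall⟩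
    refine ⟨hxi, ?_⟩
    intro y hy hxy
    have hxc := hcard i x hxi
    have hyc := hcard k y hy
    obtain ⟨z, hxz, hzy, hzc⟩ := Finset.exists_subsuperset_card_eq (n := j - i + x.card) hxy (by omega) (by omega)
    have hzcard : z.card = j + 1 := by omega
    have hzC : z ∈ C := hCsub y hy.1 z hzy (Finset.card_pos.mp (by omega))
    have hzj : z ∈ simplices C j := ⟨hzC, by omega⟩
    exact (hforall z hzj hxz).2 y hy hzy
  · rintro ⟨hxi, hforall⟩
    refine ⟨hxi, ?_⟩
    intro z hz hxz
    exact ⟨hz, fun y hy hzy => hforall y hy (hxz.trans hzy)⟩
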